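/- Let X be a graph (not necessarily one-ended) and n ≥ 2 an integer. The lamplighter graph L_n(X) is coarsely simply connected if and only if X is bounded. -/

import Mathlib

open SimpleGraph

/-- The lamplighter graph `L_n(X)`: vertices are pairs of a finitely supported
colouring `V → ZMod n` and a vertex; edges either move the arrow along an edge of
the base graph keeping the colouring, or change the colouring exactly at the
position of the arrow. -/
def lamp {V : Type*} (n : ℕ) (G : SimpleGraph V) :
    SimpleGraph ((V →₀ ZMod n) × V) where
  Adj x y := (x.1 = y.1 ∧ G.Adj x.2 y.2) ∨
    (x.2 = y.2 ∧ x.1 ≠ y.1 ∧ ∀ v, v ≠ x.2 → x.1 v = y.1 v)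
  symm := ⟨by
    rintro ⟨c1, p1⟩ ⟨c2, p2⟩ (⟨hc, hp⟩ | ⟨hp, hcne, hv⟩)
    · exact Or.inl ⟨hc.symm, hp.symm⟩
    · exact Or.inr ⟨hp.symm, hcne.symm,
        fun v hv2 => (hv v (by rw [hp]; exact hv2)).symm⟩⟩
  loopless := ⟨by
    rintro ⟨c, p⟩ (⟨_, hp⟩ | ⟨_, hcne, _⟩)
    · exact G.loopless.irrefl p hp
    · exact hcne rfl⟩

/-- A list of vertices is a chain if consecutive entries are equal or adjacent. -/
def IsGChain {V : Type*} (G : SimpleGraph V) (l : List V) : Prop :=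
  l.Chain' (fun u v => u = v ∨ G.Adj u v)

/-- An elementary homotopy at scale `R`: replace a segment `s` of a loop by another
segment `s'` with the same endpoints, so that the cycle formed by `s` and `s'` has
length at most `R`. -/
def ElemMove {V : Type*} (G : SimpleGraph V) (R : ℕ) (l l' : List V) : Prop :=
  ∃ pre s s' post : List V,
    l = pre ++ s ++ post ∧ l' = pre ++ s' ++ post ∧
    IsGChain G s ∧ IsGChain G s' ∧ s.head? = s'.head? ∧ s.getLast? = s'.getLast? ∧
    s.length + s'.length ≤ R

/-- A graph is coarsely simply connected if, for some `R ≥ 0`, every loop can be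
contracted to a point by elementary homotopies across cycles of length at most `R`,
i.e. the 2-complex obtained by filling in all cycles of length `≤ R` with discs is
simply connected. -/
def CoarselySimplyConnected {V : Type*} (G : SimpleGraph V) : Prop :=
  ∃ R : ℕ, ∀ (a : V) (l : List V), IsGChain G l → l.head? = some a →
    l.getLast? = some a → Relation.ReflTransGen (ElemMove G R) l [a]

namespace LLAux

variable {α M : Type*} [AddCommMonoid M]

def pairSum (g : α → α → M) : List α → M
  | [] => 0
  | [_] => 0
  | x :: y :: t => g x y + pairSum g (y :: t)

def jn (g : α → α → M) : Option α → Option α → M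
  | some x, some y => g x y
  | _, _ => 0

@[simp] lemma jn_none_left (g : α → α → M) (o : Option α) : jn g none o = 0 := by
  cases o <;> rfl

@[simp] lemma jn_none_right (g : α → α → M) (o : Option α) : jn g o none = 0 := by
  cases o <;> rfl

@[simp] lemma jn_some_some (g : α → α → M) (x y : α) : jn g (some x) (some y) = g x y := rfl

@[simp] lemma pairSum_nil (g : α → α → M) : pairSum g [] = 0 := rfl
@[simp] lemma pairSum_single (g : α → α → M) (x : α) : pairSum g [x] = 0 := rfl
@[simp] lemma pairSum_cons_cons (g : α → α → M) (x y : α) (t : List α) :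
    pairSum g (x :: y :: t) = g x y + pairSum g (y :: t) := rfl

lemma pairSum_append (g : α → α → M) :
    ∀ (E F : List α),
      pairSum g (E ++ F) = pairSum g E + jn g E.getLast? F.head? + pairSum g F
  | [], F => by simp
  | [x], F => by
      cases F with
      | nil => simp
      | cons y t => simp [pairSum]
  | x :: y :: t, F => by
      have ih := pairSum_append g (y :: t) F
      simp only [List.cons_append, pairSum_cons_cons, List.getLast?_cons_cons] at *
      rw [ih]
      abel

lemma getLast?_map {β : Type*} (f : α → β) (l : List α) :
    (l.map f).getLast? = l.getLast?.map f := by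
  rw [← List.head?_reverse, ← List.map_reverse, List.head?_map, List.head?_reverse]

section Lamp

variable {V : Type*} {n : ℕ} {G : SimpleGraph V}

/-- The step relation of the lamplighter graph: equal or adjacent. -/
def Stp (n : ℕ) (G : SimpleGraph V) (x y : (V →₀ ZMod n) × V) : Prop :=
  x = y ∨ (lamp n G).Adj x y

lemma isGChain_eq (l : List ((V →₀ ZMod n) × V)) :
    IsGChain (lamp n G) l = l.Chain' (Stp n G) := rfl

lemma Stp.cfg_eq {u : V} {x y : (V →₀ ZMod n) × V} (h : Stp n G x y) (hx : x.2 ≠ u) :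
    x.1 u = y.1 u := by
  rcases h with rfl | (⟨h1, _⟩ | ⟨_, _, h3⟩)
  · rfl
  · rw [h1]
  · exact h3 u hx.symm

lemma Stp.pos (h : Stp n G x y) : x.2 = y.2 ∨ G.Adj x.2 y.2 := by
  rcases h with rfl | (⟨_, h2⟩ | ⟨h1, _, _⟩)
  · exact Or.inl rfl
  · exact Or.inr h2
  · exact Or.inl h1

/-- From a chain, a walk from the head's position to any member's position. -/
lemma chain_walk :
    ∀ (l : List ((V →₀ ZMod n) × V)) (x p : (V →₀ ZMod n) × V),
      List.Chain' (Stp n G) (x :: l) → p ∈ x :: l →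
      ∃ w : G.Walk x.2 p.2, w.length ≤ l.length
  | [], x, p, _, hp => by
      rw [List.mem_singleton] at hp; subst hp; exact ⟨Walk.nil, by simp⟩
  | y :: t, x, p, hc, hp => by
      rcases List.mem_cons.mp hp with rfl | hp'
      · exact ⟨Walk.nil, by simp⟩
      · obtain ⟨w, hw⟩ := chain_walk t y p hc.tail hp'
        rcases (List.isChain_cons_cons.mp hc).1.pos with he | ha
        · exact ⟨w.copy he.symm rfl, by simpa using Nat.le_succ_of_le hw⟩
        · exact ⟨Walk.cons ha w, by simpa using Nat.succ_le_succ hw⟩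

end Lamp


section Invariant

variable {V : Type*} {n : ℕ} {G : SimpleGraph V}

lemma gchain_stp {l : List ((V →₀ ZMod n) × V)} (h : IsGChain (lamp n G) l) :
    List.Chain' (Stp n G) l := h

/-- Weight of a step for the invariant. -/
def Fg (u v : V) (x y : (V →₀ ZMod n) × V) : ZMod n :=
  (y.1 u - x.1 u) * x.1 v

/-- The invariant: sum of step weights. -/
def FF (u v : V) : List ((V →₀ ZMod n) × V) → ZMod n := pairSum (Fg u v)

lemma FF_eq (u v : V) (l : List ((V →₀ ZMod n) × V)) :
    FF u v l = pairSum (Fg u v) l := rfl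

lemma FF_zero_of_no_u (u v : V) :
    ∀ (l : List ((V →₀ ZMod n) × V)), List.Chain' (Stp n G) l →
      (∀ p ∈ l, p.2 ≠ u) → FF u v l = 0
  | [], _, _ => rfl
  | [x], _, _ => rfl
  | x :: y :: t, hc, h => by
      have hx : x.1 u = y.1 u := (List.isChain_cons_cons.mp hc).1.cfg_eq (h x (by simp))
      have ih := FF_zero_of_no_u u v (y :: t) hc.tail
        (fun p hp => h p (List.mem_cons_of_mem _ hp))
      show Fg u v x y + FF u v (y :: t) = 0
      rw [ih, Fg, hx, sub_self, zero_mul, add_zero]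

lemma cfgv_const (v : V) :
    ∀ (l : List ((V →₀ ZMod n) × V)) (x : (V →₀ ZMod n) × V),
      List.Chain' (Stp n G) (x :: l) → (∀ p ∈ x :: l, p.2 ≠ v) →
      ∀ p ∈ x :: l, p.1 v = x.1 v
  | [], x, _, _, p, hp => by rw [List.mem_singleton] at hp; subst hp; rfl
  | y :: t, x, hc, h, p, hp => by
      rcases List.mem_cons.mp hp with rfl | hp'
      · rfl
      · have hx : x.1 v = y.1 v := (List.isChain_cons_cons.mp hc).1.cfg_eq (h x (by simp))
        have := cfgv_const v t y hc.tail
          (fun q hq => h q (List.mem_cons_of_mem _ hq)) p hp'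
        rw [this, hx]

lemma FF_tele (u v : V) (k : ZMod n) :
    ∀ (t : List ((V →₀ ZMod n) × V)) (x z : (V →₀ ZMod n) × V),
      (x :: t).getLast? = some z → (∀ p ∈ x :: t, p.1 v = k) →
      FF u v (x :: t) = (z.1 u - x.1 u) * k
  | [], x, z, hl, _ => by
      simp only [List.getLast?_singleton, Option.some_inj] at hl
      subst hl
      show (0 : ZMod n) = _
      rw [sub_self, zero_mul]
  | y :: t, x, z, hl, h => by
      have ih := FF_tele u v k t y z (by simpa using hl)
        (fun p hp => h p (List.mem_cons_of_mem _ hp))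
      have hx : x.1 v = k := h x (by simp)
      show Fg u v x y + FF u v (y :: t) = _
      rw [ih, Fg, hx]
      ring

lemma FF_seg (u v : V) (R : ℕ) (hdist : ¬ G.dist u v ≤ 2 * R)
    {s s' : List ((V →₀ ZMod n) × V)}
    (hs : List.Chain' (Stp n G) s) (hs' : List.Chain' (Stp n G) s')
    (hh : s.head? = s'.head?) (hl : s.getLast? = s'.getLast?)
    (hlen : s.length + s'.length ≤ R) : FF u v s = FF u v s' := by
  cases s with
  | nil =>
      have : s' = [] := List.head?_eq_none_iff.mp hh.symm
      subst this; rfl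
  | cons x t =>
      cases s' with
      | nil => simp at hh
      | cons x' t' =>
          simp only [List.head?_cons, Option.some_inj] at hh
          subst hh
          simp only [List.length_cons] at hlen
          by_cases hu : (∃ p ∈ x :: t, p.2 = u) ∨ (∃ p ∈ x :: t', p.2 = u)
          · by_cases hv : (∃ p ∈ x :: t, p.2 = v) ∨ (∃ p ∈ x :: t', p.2 = v)
            · exfalso
              have hwu : ∃ w : G.Walk x.2 u, w.length ≤ R := by
                rcases hu with ⟨p, hp, hpu⟩ | ⟨p, hp, hpu⟩
                · obtain ⟨w, hw⟩ := chain_walk t x p hs hp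
                  exact ⟨w.copy rfl hpu, by rw [Walk.length_copy]; omega⟩
                · obtain ⟨w, hw⟩ := chain_walk t' x p hs' hp
                  exact ⟨w.copy rfl hpu, by rw [Walk.length_copy]; omega⟩
              have hwv : ∃ w : G.Walk x.2 v, w.length ≤ R := by
                rcases hv with ⟨p, hp, hpv⟩ | ⟨p, hp, hpv⟩
                · obtain ⟨w, hw⟩ := chain_walk t x p hs hp
                  exact ⟨w.copy rfl hpv, by rw [Walk.length_copy]; omega⟩
                · obtain ⟨w, hw⟩ := chain_walk t' x p hs' hp
                  exact ⟨w.copy rfl hpv, by rw [Walk.length_copy]; omega⟩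
              obtain ⟨w1, hw1⟩ := hwu
              obtain ⟨w2, hw2⟩ := hwv
              have := SimpleGraph.dist_le (w1.reverse.append w2)
              simp only [Walk.length_append, Walk.length_reverse] at this
              exact hdist (by omega)
            · push_neg at hv
              obtain ⟨hv1, hv2⟩ := hv
              obtain ⟨z, hz⟩ : ∃ z, (x :: t).getLast? = some z :=
                ⟨_, List.getLast?_eq_getLast (by simp)⟩
              have hz' : (x :: t').getLast? = some z := by rw [← hl]; exact hz
              rw [FF_tele u v (x.1 v) t x z hz
                    (fun p hp => cfgv_const v t x hs hv1 p hp),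
                  FF_tele u v (x.1 v) t' x z hz'
                    (fun p hp => cfgv_const v t' x hs' hv2 p hp)]
          · push_neg at hu
            obtain ⟨hu1, hu2⟩ := hu
            rw [FF_zero_of_no_u u v _ hs hu1, FF_zero_of_no_u u v _ hs' hu2]

lemma FF_move (u v : V) (R : ℕ) (hdist : ¬ G.dist u v ≤ 2 * R)
    {l l' : List ((V →₀ ZMod n) × V)} (h : ElemMove (lamp n G) R l l') :
    FF u v l = FF u v l' := by
  obtain ⟨pre, s, s', post, rfl, rfl, cs, cs', hh, hl, hlen⟩ := h
  cases s with
  | nil =>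
      have : s' = [] := List.head?_eq_none_iff.mp hh.symm
      subst this; rfl
  | cons x t =>
      cases s' with
      | nil => simp at hh
      | cons x' t' =>
          simp only [List.head?_cons, Option.some_inj] at hh
          subst hh
          have hseg : pairSum (Fg u v) (x :: t) = pairSum (Fg u v) (x :: t') :=
            FF_seg u v R hdist (gchain_stp cs) (gchain_stp cs') rfl hl hlen
          rw [List.append_assoc, List.append_assoc]
          show pairSum (Fg u v) _ = pairSum (Fg u v) _
          rw [pairSum_append, pairSum_append (Fg u v) (x :: t) post,
              pairSum_append, pairSum_append (Fg u v) (x :: t') post]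
          have h1 : ((x :: t) ++ post).head? = some x := by simp
          have h2 : ((x :: t') ++ post).head? = some x := by simp
          rw [h1, h2, hl, hseg]

lemma FF_rt (u v : V) (R : ℕ) (hdist : ¬ G.dist u v ≤ 2 * R)
    {l l' : List ((V →₀ ZMod n) × V)}
    (h : Relation.ReflTransGen (ElemMove (lamp n G) R) l l') :
    FF u v l = FF u v l' := by
  induction h with
  | refl => rfl
  | tail _ hstep ih => exact ih.trans (FF_move u v R hdist hstep)

end Invariant


section Forward

variable {V : Type*} {n : ℕ} {G : SimpleGraph V}

lemma msup_chain (c : V →₀ ZMod n) {x y : V} (w : G.Walk x y) :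
    List.Chain' (Stp n G) (w.support.map fun z => (c, z)) := by
  show List.IsChain _ _
  rw [List.isChain_map]
  exact w.isChain_adj_support.imp fun a b hab => Or.inr (Or.inl ⟨rfl, hab⟩)

lemma msup_head (c : V →₀ ZMod n) {x y : V} (w : G.Walk x y) :
    (w.support.map fun z => (c, z)).head? = some (c, x) := by
  rw [w.support_eq_cons]; rfl

lemma msup_last (c : V →₀ ZMod n) {x y : V} (w : G.Walk x y) :
    (w.support.map fun z => (c, z)).getLast? = some (c, y) := by
  rw [getLast?_map, List.getLast?_eq_getLast w.support_ne_nil, w.getLast_support]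
  rfl

lemma msup_ne_nil (c : V →₀ ZMod n) {x y : V} (w : G.Walk x y) :
    (w.support.map fun z => (c, z)) ≠ [] := by
  simp [w.support_ne_nil]

lemma FF_map_const (u v : V) (c : V →₀ ZMod n) :
    ∀ lst : List V, FF u v (lst.map fun z => (c, z)) = 0
  | [] => rfl
  | [x] => rfl
  | x :: y :: t => by
      show Fg u v (c, x) (c, y) + FF u v ((y :: t).map fun z => (c, z)) = 0
      rw [FF_map_const u v c (y :: t), Fg]
      simp

lemma chain'_append_of {α : Type*} {r : α → α → Prop} {E F : List α} {p q : α}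
    (h1 : List.Chain' r E) (h2 : List.Chain' r F)
    (hE : E.getLast? = some p) (hF : F.head? = some q) (hpq : r p q) :
    List.Chain' r (E ++ F) := by
  refine h1.append h2 ?_
  intro a ha b hb
  rw [hE, Option.mem_some_iff] at ha
  rw [hF, Option.mem_some_iff] at hb
  subst ha; subst hb; exact hpq

lemma head?_append_of {α : Type*} {E F : List α} {p : α} (hE : E.head? = some p) :
    (E ++ F).head? = some p := by
  cases E with
  | nil => simp at hE
  | cons a t => simpa using hE

lemma getLast?_append_of {α : Type*} {E F : List α} {p : α} (hF : F.getLast? = some p) :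
    (E ++ F).getLast? = some p := by
  have : F ≠ [] := by rintro rfl; simp at hF
  rw [List.getLast?_append_of_ne_nil _ this]; exact hF

theorem forward_dir [Nonempty V] (hn : 2 ≤ n) (hG : G.Connected)
    (h : CoarselySimplyConnected (lamp n G)) : ∃ R : ℕ, ∀ x y : V, G.dist x y ≤ R := by
  classical
  by_contra hb
  push_neg at hb
  obtain ⟨R, hR⟩ := h
  obtain ⟨u, v, huv⟩ := hb (2 * R)
  have hdist : ¬ G.dist u v ≤ 2 * R := by omega
  have hune : u ≠ v := by
    rintro rfl
    rw [SimpleGraph.dist_self] at huv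
    omega
  haveI : Fact (1 < n) := ⟨hn⟩
  obtain ⟨w⟩ := hG.preconnected u v
  set e1 : V →₀ ZMod n := Finsupp.single u 1 with he1
  set ev : V →₀ ZMod n := Finsupp.single v 1 with hev
  have hu_e1 : e1 u = 1 := Finsupp.single_eq_same
  have hv_e1 : e1 v = 0 := Finsupp.single_eq_of_ne' hune
  have hu_ev : ev u = 0 := Finsupp.single_eq_of_ne' hune.symm
  have hv_ev : ev v = 1 := Finsupp.single_eq_same
  set S1 : List ((V →₀ ZMod n) × V) := [(0, u)] with hS1
  set S2 : List ((V →₀ ZMod n) × V) := w.support.map fun z => (e1, z) with hS2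
  set S3 : List ((V →₀ ZMod n) × V) := w.reverse.support.map fun z => (e1 + ev, z) with hS3
  set S4 : List ((V →₀ ZMod n) × V) := w.support.map fun z => (ev, z) with hS4
  set S5 : List ((V →₀ ZMod n) × V) := w.reverse.support.map fun z => ((0 : V →₀ ZMod n), z)
    with hS5
  -- junction adjacencies
  have j1 : Stp n G ((0 : V →₀ ZMod n), u) (e1, u) := by
    refine Or.inr (Or.inr ⟨rfl, ?_, ?_⟩)
    · intro hc
      have := DFunLike.congr_fun hc u
      rw [hu_e1] at this
      exact one_ne_zero (α := ZMod n) this.symm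
    · intro z hz
      show (0 : ZMod n) = e1 z
      rw [he1, Finsupp.single_eq_of_ne' (fun hh => hz (hh.symm))]
  have j2 : Stp n G (e1, v) (e1 + ev, v) := by
    refine Or.inr (Or.inr ⟨rfl, ?_, ?_⟩)
    · intro hc
      have := DFunLike.congr_fun hc v
      rw [Finsupp.add_apply, hv_e1, hv_ev, zero_add] at this
      exact one_ne_zero (α := ZMod n) this.symm
    · intro z hz
      show e1 z = e1 z + ev z
      rw [hev, Finsupp.single_eq_of_ne' (fun hh => hz (hh.symm)), add_zero]
  have j3 : Stp n G (e1 + ev, u) (ev, u) := by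
    refine Or.inr (Or.inr ⟨rfl, ?_, ?_⟩)
    · intro hc
      have := DFunLike.congr_fun hc u
      rw [Finsupp.add_apply, hu_e1, hu_ev, add_zero] at this
      exact one_ne_zero (α := ZMod n) this
    · intro z hz
      show e1 z + ev z = ev z
      rw [he1, Finsupp.single_eq_of_ne' (fun hh => hz (hh.symm)), zero_add]
  have j4 : Stp n G (ev, v) ((0 : V →₀ ZMod n), v) := by
    refine Or.inr (Or.inr ⟨rfl, ?_, ?_⟩)
    · intro hc
      have := DFunLike.congr_fun hc v
      rw [hv_ev] at this
      exact one_ne_zero (α := ZMod n) this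
    · intro z hz
      show ev z = (0 : ZMod n)
      rw [hev, Finsupp.single_eq_of_ne' (fun hh => hz (hh.symm))]
  -- heads and lasts of the pieces
  have h2h : S2.head? = some (e1, u) := msup_head _ w
  have h2l : S2.getLast? = some (e1, v) := msup_last _ w
  have h3h : S3.head? = some (e1 + ev, v) := msup_head _ w.reverse
  have h3l : S3.getLast? = some (e1 + ev, u) := msup_last _ w.reverse
  have h4h : S4.head? = some (ev, u) := msup_head _ w
  have h4l : S4.getLast? = some (ev, v) := msup_last _ w
  have h5h : S5.head? = some ((0 : V →₀ ZMod n), v) := msup_head _ w.reverse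
  have h5l : S5.getLast? = some ((0 : V →₀ ZMod n), u) := msup_last _ w.reverse
  set L : List ((V →₀ ZMod n) × V) := S1 ++ (S2 ++ (S3 ++ (S4 ++ S5))) with hL
  have c45 : List.Chain' (Stp n G) (S4 ++ S5) :=
    chain'_append_of (msup_chain _ w) (msup_chain _ w.reverse) h4l h5h j4
  have c345 : List.Chain' (Stp n G) (S3 ++ (S4 ++ S5)) :=
    chain'_append_of (msup_chain _ w.reverse) c45 h3l (head?_append_of h4h) j3
  have c2345 : List.Chain' (Stp n G) (S2 ++ (S3 ++ (S4 ++ S5))) :=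
    chain'_append_of (msup_chain _ w) c345 h2l (head?_append_of h3h) j2
  have cL : List.Chain' (Stp n G) L :=
    chain'_append_of (List.isChain_singleton _) c2345 rfl (head?_append_of h2h) j1
  have hLhead : L.head? = some ((0 : V →₀ ZMod n), u) := rfl
  have hLlast : L.getLast? = some ((0 : V →₀ ZMod n), u) :=
    getLast?_append_of (getLast?_append_of (getLast?_append_of (getLast?_append_of h5l)))
  -- compute the invariant of L
  have hFF : FF u v L = -1 := by
    rw [hL, FF_eq]
    rw [pairSum_append, pairSum_append, pairSum_append, pairSum_append]
    rw [show S1.getLast? = some ((0 : V →₀ ZMod n), u) from rfl,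
        head?_append_of h2h, h2l, head?_append_of h3h, h3l, head?_append_of h4h,
        h4l, h5h]
    rw [← FF_eq, ← FF_eq, ← FF_eq, ← FF_eq, ← FF_eq]
    rw [hS2, hS3, hS4, hS5, FF_map_const, FF_map_const, FF_map_const, FF_map_const]
    show (0 : ZMod n) + Fg u v (0, u) (e1, u) + (0 + Fg u v (e1, v) (e1 + ev, v)
      + (0 + Fg u v (e1 + ev, u) (ev, u) + (0 + Fg u v (ev, v) (0, v) + 0))) = -1
    simp only [Fg, Finsupp.add_apply, Finsupp.coe_zero, Pi.zero_apply,
      hu_e1, hv_e1, hu_ev, hv_ev]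
    ring
  have hrt := hR ((0 : V →₀ ZMod n), u) L cL hLhead hLlast
  have := FF_rt u v R hdist hrt
  rw [hFF] at this
  have h10 : (1 : ZMod n) = 0 := by
    have := neg_eq_zero.mp (this.trans rfl)
    exact this
  exact one_ne_zero h10

end Forward


section Backward

variable {V : Type*} {n : ℕ} {G : SimpleGraph V}

open Classical in
/-- Step weight for counting toggles. -/
noncomputable def tg : ((V →₀ ZMod n) × V) → ((V →₀ ZMod n) × V) → ℕ :=
  fun x y => if x.1 = y.1 then 0 else 1

/-- Number of toggle steps in a list. -/
noncomputable def tog : List ((V →₀ ZMod n) × V) → ℕ := pairSum tg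

lemma tg_eq_zero {x y : (V →₀ ZMod n) × V} (h : x.1 = y.1) : tg x y = 0 := by
  rw [tg]; simp [h]

lemma tg_eq_one {x y : (V →₀ ZMod n) × V} (h : x.1 ≠ y.1) : tg x y = 1 := by
  rw [tg]; simp [h]

lemma tg_le_one (x y : (V →₀ ZMod n) × V) : tg x y ≤ 1 := by
  rw [tg]; split <;> omega

lemma cfg_eq_of_tg_eq_zero {x y : (V →₀ ZMod n) × V} (h : tg x y = 0) : x.1 = y.1 := by
  by_contra hc
  rw [tg_eq_one hc] at h
  omega

/-- Basic move constructor. -/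
lemma mk_move {R : ℕ} {pre s s' post : List ((V →₀ ZMod n) × V)}
    (hs : List.Chain' (Stp n G) s) (hs' : List.Chain' (Stp n G) s')
    (hh : s.head? = s'.head?) (hl : s.getLast? = s'.getLast?)
    (hlen : s.length + s'.length ≤ R) :
    ElemMove (lamp n G) R (pre ++ s ++ post) (pre ++ s' ++ post) :=
  ⟨pre, s, s', post, rfl, rfl, hs, hs', hh, hl, hlen⟩

lemma one_shot {R : ℕ} {l : List ((V →₀ ZMod n) × V)} {a : (V →₀ ZMod n) × V}
    (hc : List.Chain' (Stp n G) l) (hh : l.head? = some a) (hl : l.getLast? = some a)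
    (hlen : l.length + 1 ≤ R) :
    Relation.ReflTransGen (ElemMove (lamp n G) R) l [a] := by
  refine Relation.ReflTransGen.single ?_
  have := mk_move (G := G) (pre := []) (post := ([] : List ((V →₀ ZMod n) × V)))
    hc (List.isChain_singleton a) (by rw [hh]; rfl) (by rw [hl]; rfl) (by simpa using hlen)
  simpa using this

lemma head?_of_append {α : Type*} {E F : List α} {a : α}
    (h : (E ++ F).head? = some a) (hE : E ≠ []) : E.head? = some a := by
  cases E with
  | nil => exact absurd rfl hE
  | cons x t => simpa using h

lemma junction_of_chain {α : Type*} {r : α → α → Prop} {E F : List α} {p q : α}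
    (h : List.Chain' r (E ++ F)) (hE : E.getLast? = some p) (hF : F.head? = some q) :
    r p q := by
  have h3 := (List.isChain_append.mp h).2.2
  exact h3 p (by rw [hE]; rfl) q (by rw [hF]; rfl)

lemma mlist_chain (c : V →₀ ZMod n) {lst : List V} (h : List.Chain' G.Adj lst) :
    List.Chain' (Stp n G) (lst.map fun z => (c, z)) := by
  show List.IsChain _ _
  rw [List.isChain_map]
  exact h.imp fun a b hab => Or.inr (Or.inl ⟨rfl, hab⟩)

lemma head?_append_left {α : Type*} {E F : List α} (hE : E ≠ []) :
    (E ++ F).head? = E.head? := by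
  cases E with
  | nil => exact absurd rfl hE
  | cons x t => rfl

lemma upd_same (f : V →₀ ZMod n) (a : V) (b : ZMod n) : f.update a b a = b := by
  classical
  rw [Finsupp.coe_update, Function.update_self]

lemma upd_ne (f : V →₀ ZMod n) {a z : V} (b : ZMod n) (h : z ≠ a) : f.update a b z = f z := by
  classical
  rw [Finsupp.coe_update, Function.update_of_ne h]

/-- Reset the lamp at `u` to the value `a0`. -/
noncomputable def shiftC (u : V) (a0 : ZMod n) : ((V →₀ ZMod n) × V) → ((V →₀ ZMod n) × V) :=
  fun r => (r.1.update u a0, r.2)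

lemma shiftC_eq_self {u : V} {a0 : ZMod n} {r : (V →₀ ZMod n) × V} (h : r.1 u = a0) :
    shiftC u a0 r = r := by
  rw [shiftC, ← h, Finsupp.update_self]

lemma shiftC_step {u : V} {a0 : ZMod n} {x y : (V →₀ ZMod n) × V}
    (h : Stp n G x y) (hxy : x.1 u = y.1 u) :
    Stp n G (shiftC u a0 x) (shiftC u a0 y) := by
  rcases h with rfl | (⟨h1, h2⟩ | ⟨h1, h2, h3⟩)
  · exact Or.inl rfl
  · exact Or.inr (Or.inl ⟨by rw [shiftC, shiftC, h1], h2⟩)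
  · have hne : x.2 ≠ u := by
      rintro rfl
      exact h2 (Finsupp.ext fun z => by
        by_cases hz : z = x.2
        · rw [hz]; exact hxy
        · exact h3 z hz)
    refine Or.inr (Or.inr ⟨h1, ?_, ?_⟩)
    · intro hc
      apply h2
      ext z
      by_cases hz : z = u
      · subst hz; exact hxy
      · have := DFunLike.congr_fun hc z
        simp only [shiftC] at this
        rwa [upd_ne _ _ hz, upd_ne _ _ hz] at this
    · intro z hz
      show (x.1.update u a0) z = (y.1.update u a0) z
      by_cases hzu : z = u
      · subst hzu; rw [upd_same, upd_same]
      · rw [upd_ne _ _ hzu, upd_ne _ _ hzu]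
        exact h3 z hz

lemma chain_map_shiftC {u : V} {a0 : ZMod n} {k : ZMod n} :
    ∀ (M : List ((V →₀ ZMod n) × V)), List.Chain' (Stp n G) M →
      (∀ p ∈ M, p.1 u = k) → List.Chain' (Stp n G) (M.map (shiftC u a0))
  | [] , _, _ => List.isChain_nil
  | [x], _, _ => List.isChain_singleton _
  | x :: y :: t, hc, h => by
      rw [List.map_cons, List.map_cons]
      show List.IsChain _ _
      rw [List.isChain_cons_cons]
      constructor
      · refine shiftC_step (List.isChain_cons_cons.mp hc).1 ?_
        rw [h x (by simp), h y (by simp)]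
      · rw [← List.map_cons]
        exact chain_map_shiftC (y :: t) hc.tail (fun p hp => h p (List.mem_cons_of_mem _ hp))

lemma exists_pathList (hG : G.Connected) {D : ℕ} (hD : ∀ x y : V, G.dist x y ≤ D) (x y : V) :
    ∃ lp : List V, lp.Chain' G.Adj ∧ lp.head? = some x ∧ lp.getLast? = some y ∧
      lp.length ≤ D + 1 := by
  obtain ⟨p, hp⟩ := (hG.preconnected x y).exists_walk_length_eq_dist
  refine ⟨p.support, p.isChain_adj_support, by rw [p.support_eq_cons]; rfl, ?_, ?_⟩
  · rw [List.getLast?_eq_getLast p.support_ne_nil, p.getLast_support]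
  · rw [Walk.length_support, hp]
    have := hD x y
    omega

/-- Existence of a detour list realising a delayed toggle. -/
lemma exists_det (hG : G.Connected) {D : ℕ} (hD : ∀ x y : V, G.dist x y ≤ D)
    (u : V) (a0 : ZMod n) (r : (V →₀ ZMod n) × V) :
    ∃ Dd : List ((V →₀ ZMod n) × V), List.Chain' (Stp n G) Dd ∧
      Dd.head? = some (shiftC u a0 r) ∧ Dd.getLast? = some r ∧ Dd.length ≤ 2 * D + 2 := by
  obtain ⟨p1, hc1, hh1, hl1, hlen1⟩ := exists_pathList hG hD r.2 u
  obtain ⟨p2, hc2, hh2, hl2, hlen2⟩ := exists_pathList hG hD u r.2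
  refine ⟨p1.map (fun z => (r.1.update u a0, z)) ++ p2.map (fun z => (r.1, z)),
    ?_, ?_, ?_, ?_⟩
  · refine chain'_append_of (p := (r.1.update u a0, u)) (q := (r.1, u))
      (mlist_chain _ hc1) (mlist_chain _ hc2) ?_ ?_ ?_
    · rw [getLast?_map, hl1]; rfl
    · rw [List.head?_map, hh2]; rfl
    · by_cases h : r.1 u = a0
      · refine Or.inl ?_
        rw [Prod.ext_iff]
        exact ⟨by rw [← h, Finsupp.update_self], rfl⟩
      · refine Or.inr (Or.inr ⟨rfl, ?_, ?_⟩)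
        · intro hc
          apply h
          have := DFunLike.congr_fun hc u
          rw [upd_same] at this
          exact this.symm
        · intro z hz
          show (r.1.update u a0) z = r.1 z
          exact upd_ne _ _ hz
  · have hne : (p1.map fun z => ((r.1.update u a0 : V →₀ ZMod n), z)) ≠ [] := by
      simp only [ne_eq, List.map_eq_nil_iff]
      rintro rfl
      simp at hh1
    rw [head?_append_left hne, List.head?_map, hh1]
    rfl
  · refine getLast?_append_of ?_
    rw [getLast?_map, hl2]
    rfl
  · rw [List.length_append, List.length_map, List.length_map]
    omega

/-- Detour specification. -/
def IsDet (G : SimpleGraph V) (D : ℕ) (u : V) (a0 : ZMod n) (r : (V →₀ ZMod n) × V)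
    (Dd : List ((V →₀ ZMod n) × V)) : Prop :=
  List.Chain' (Stp n G) Dd ∧ Dd.head? = some (shiftC u a0 r) ∧ Dd.getLast? = some r ∧
    Dd.length ≤ 2 * D + 2

lemma ne_nil_of_head? {α : Type*} {l : List α} {a : α} (h : l.head? = some a) : l ≠ [] := by
  rintro rfl; simp at h

lemma slide_aux (hG : G.Connected) {D : ℕ} (hD : ∀ x y : V, G.dist x y ≤ D)
    (u : V) (a0 : ZMod n) (R : ℕ) (hR : 4 * D + 20 ≤ R) :
    ∀ (M : List ((V →₀ ZMod n) × V)) (r : (V →₀ ZMod n) × V)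
      (Pre Suf Dr : List ((V →₀ ZMod n) × V)) (z : (V →₀ ZMod n) × V),
      List.Chain' (Stp n G) (r :: M) → (∀ p ∈ r :: M, p.1 u = r.1 u) →
      (r :: M).getLast? = some z →
      IsDet G D u a0 r Dr →
      ∃ Dl, IsDet G D u a0 z Dl ∧
        Relation.ReflTransGen (ElemMove (lamp n G) R)
          (Pre ++ Dr ++ M ++ Suf)
          (Pre ++ ((r :: M).dropLast).map (shiftC u a0) ++ Dl ++ Suf) := by
  intro M
  induction M with
  | nil =>
      intro r Pre Suf Dr z hc hcfg hz hDr
      simp only [List.getLast?_singleton, Option.some_inj] at hz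
      subst hz
      refine ⟨Dr, hDr, ?_⟩
      simp only [List.dropLast_singleton, List.map_nil, List.append_nil]
      exact Relation.ReflTransGen.refl
  | cons m M' ih =>
      intro r Pre Suf Dr z hc hcfg hz hDr
      obtain ⟨hDrc, hDrh, hDrl, hDrlen⟩ := hDr
      obtain ⟨Dm, hDmc, hDmh, hDml, hDmlen⟩ := exists_det hG hD u a0 m
      have hstep : Stp n G r m := (List.isChain_cons_cons.mp hc).1
      have hrm : r.1 u = m.1 u := (hcfg m (by simp)).symm
      have hs : List.Chain' (Stp n G) (Dr ++ [m]) :=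
        chain'_append_of hDrc (List.isChain_singleton m) hDrl rfl hstep
      have hs' : List.Chain' (Stp n G) ([shiftC u a0 r] ++ Dm) :=
        chain'_append_of (List.isChain_singleton _) hDmc rfl hDmh
          (shiftC_step hstep hrm)
      have hhh : (Dr ++ [m]).head? = ([shiftC u a0 r] ++ Dm).head? := by
        rw [head?_append_left (ne_nil_of_head? hDrh), hDrh]
        rfl
      have hll : (Dr ++ [m]).getLast? = ([shiftC u a0 r] ++ Dm).getLast? := by
        rw [getLast?_append_of (E := Dr) (F := [m]) (p := m) (by simp),
            getLast?_append_of (E := [shiftC u a0 r]) hDml]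
      have hlen : (Dr ++ [m]).length + ([shiftC u a0 r] ++ Dm).length ≤ R := by
        simp only [List.length_append, List.length_singleton, List.length_cons,
          List.length_nil]
        omega
      have hmv := mk_move (G := G) (R := R) (pre := Pre) (post := M' ++ Suf) hs hs' hhh hll hlen
      obtain ⟨Dl, hDl, hrt⟩ := ih m (Pre ++ [shiftC u a0 r]) Suf Dm z hc.tail
        (fun p hp => (hcfg p (List.mem_cons_of_mem _ hp)).trans hrm)
        (by rw [← List.getLast?_cons_cons (a := r)]; exact hz)
        ⟨hDmc, hDmh, hDml, hDmlen⟩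
      refine ⟨Dl, hDl, ?_⟩
      have e1 : Pre ++ Dr ++ (m :: M') ++ Suf = Pre ++ (Dr ++ [m]) ++ (M' ++ Suf) := by
        simp
      have e3 : Pre ++ ((r :: m :: M').dropLast).map (shiftC u a0) ++ Dl ++ Suf
          = Pre ++ [shiftC u a0 r] ++ ((m :: M').dropLast).map (shiftC u a0) ++ Dl ++ Suf := by
        simp
      rw [e1, e3]
      refine Relation.ReflTransGen.head hmv ?_
      have e2 : Pre ++ ([shiftC u a0 r] ++ Dm) ++ (M' ++ Suf)
          = Pre ++ [shiftC u a0 r] ++ Dm ++ M' ++ Suf := by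
        simp
      rw [e2]
      exact hrt


lemma tog_map_shiftC_le (u : V) (a0 : ZMod n) :
    ∀ l : List ((V →₀ ZMod n) × V), tog (l.map (shiftC u a0)) ≤ tog l
  | [] => le_refl _
  | [_] => le_refl _
  | x :: y :: t => by
      show tg (shiftC u a0 x) (shiftC u a0 y) + tog ((y :: t).map (shiftC u a0))
        ≤ tg x y + tog (y :: t)
      have h1 : tg (shiftC u a0 x) (shiftC u a0 y) ≤ tg x y := by
        by_cases h : x.1 = y.1
        · rw [tg_eq_zero h, tg_eq_zero (show (shiftC u a0 x).1 = (shiftC u a0 y).1 by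
            simp only [shiftC]; rw [h])]
        · rw [tg_eq_one h]
          exact tg_le_one _ _
      have h2 := tog_map_shiftC_le u a0 (y :: t)
      omega

lemma tog_zero_cfg :
    ∀ (t : List ((V →₀ ZMod n) × V)) (x : (V →₀ ZMod n) × V), tog (x :: t) = 0 →
      ∀ p ∈ x :: t, p.1 = x.1
  | [], x, _, p, hp => by rw [List.mem_singleton] at hp; rw [hp]
  | y :: t', x, h, p, hp => by
      have h' : tg x y + tog (y :: t') = 0 := h
      rcases List.mem_cons.mp hp with rfl | hp'
      · rfl
      · have := tog_zero_cfg t' y (by omega) p hp'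
        rw [this, cfg_eq_of_tg_eq_zero (by omega : tg x y = 0)]

lemma first_tog :
    ∀ (t : List ((V →₀ ZMod n) × V)) (x : (V →₀ ZMod n) × V), tog (x :: t) ≠ 0 →
      ∃ A p q B, x :: t = A ++ p :: q :: B ∧ p.1 ≠ q.1 ∧ ∀ r ∈ A ++ [p], r.1 = x.1
  | [], x, h => absurd rfl h
  | y :: t', x, h => by
      by_cases hxy : x.1 = y.1
      · have h' : tog (y :: t') ≠ 0 := by
          have : tg x y + tog (y :: t') ≠ 0 := h
          rw [tg_eq_zero hxy] at this
          omega
        obtain ⟨A, p, q, B, hsplit, hne, hcfg⟩ := first_tog t' y h'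
        refine ⟨x :: A, p, q, B, by rw [List.cons_append, ← hsplit], hne, ?_⟩
        intro r hr
        rcases List.mem_cons.mp hr with rfl | hr'
        · rfl
        · rw [hcfg r hr', ← hxy]
      · exact ⟨[], x, y, t', rfl, hxy, by
          intro r hr
          rw [List.nil_append, List.mem_singleton] at hr
          rw [hr]⟩

lemma first_diff {β : Type*} (f : ((V →₀ ZMod n) × V) → β) :
    ∀ (t : List ((V →₀ ZMod n) × V)) (x z : (V →₀ ZMod n) × V),
      (x :: t).getLast? = some z → f x ≠ f z →
      ∃ A p q B, x :: t = A ++ p :: q :: B ∧ f p ≠ f q ∧ ∀ r ∈ A ++ [p], f r = f x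
  | [], x, z, hz, hne => by
      simp only [List.getLast?_singleton, Option.some_inj] at hz
      subst hz
      exact absurd rfl hne
  | y :: t', x, z, hz, hne => by
      by_cases hxy : f x = f y
      · obtain ⟨A, p, q, B, hsplit, hne', hcfg⟩ := first_diff f t' y z
          (by rw [← List.getLast?_cons_cons (a := x)]; exact hz)
          (fun hh => hne (hxy.trans hh))
        refine ⟨x :: A, p, q, B, by rw [List.cons_append, ← hsplit], hne', ?_⟩
        intro r hr
        rcases List.mem_cons.mp hr with rfl | hr'
        · rfl
        · rw [hcfg r hr', ← hxy]
      · exact ⟨[], x, y, t', rfl, hxy, by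
          intro r hr
          rw [List.nil_append, List.mem_singleton] at hr
          rw [hr]⟩

/-- Contraction of configuration-constant loops. -/
lemma contract0 (hG : G.Connected) {D : ℕ} (hD : ∀ x y : V, G.dist x y ≤ D) (R : ℕ)
    (hR : 4 * D + 20 ≤ R) :
    ∀ (k : ℕ) (l : List ((V →₀ ZMod n) × V)) (a : (V →₀ ZMod n) × V), l.length ≤ k →
      (∀ p ∈ l, p.1 = a.1) → List.Chain' (Stp n G) l → l.head? = some a →
      l.getLast? = some a →
      Relation.ReflTransGen (ElemMove (lamp n G) R) l [a] := by
  intro k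
  induction k with
  | zero =>
      intro l a hk _ _ hh _
      cases l with
      | nil => simp at hh
      | cons x t => simp at hk
  | succ k ih =>
      intro l a hk hcfg hc hh hl
      by_cases hsmall : l.length + 1 ≤ R
      · exact one_shot hc hh hl hsmall
      · have hlong : 4 * D + 20 ≤ l.length := by omega
        set s : List ((V →₀ ZMod n) × V) := l.take (D + 3) with hs
        set post : List ((V →₀ ZMod n) × V) := l.drop (D + 3) with hpost
        have hsplit : l = s ++ post := (List.take_append_drop _ l).symm
        have hslen : s.length = D + 3 := by
          rw [hs, List.length_take]
          omega
        have hpostlen : post.length = l.length - (D + 3) := by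
          rw [hpost, List.length_drop]
        have hsne : s ≠ [] := by
          intro h0
          rw [h0] at hslen
          simp at hslen
        have hpostne : post ≠ [] := by
          intro h0
          rw [h0] at hpostlen
          simp at hpostlen
          omega
        have hsh : s.head? = some a := head?_of_append (by rw [← hsplit]; exact hh) hsne
        have hz : s.getLast? = some (s.getLast hsne) := List.getLast?_eq_getLast hsne
        set z := s.getLast hsne with hzdef
        have hzmem : z ∈ l := by
          rw [hsplit]
          exact List.mem_append_left _ (List.getLast_mem hsne)
        have hz1 : z.1 = a.1 := hcfg z hzmem
        obtain ⟨lp, hlpc, hlph, hlpl, hlplen⟩ := exists_pathList hG hD a.2 z.2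
        set s' : List ((V →₀ ZMod n) × V) := lp.map (fun w => (a.1, w)) with hs'
        have hs'c : List.Chain' (Stp n G) s' := mlist_chain a.1 hlpc
        have hs'h : s'.head? = some a := by
          rw [hs', List.head?_map, hlph]
          rfl
        have hs'l : s'.getLast? = some z := by
          rw [hs', getLast?_map, hlpl]
          show some (a.1, z.2) = some z
          rw [← hz1]
        have hs'ne : s' ≠ [] := ne_nil_of_head? hs'h
        have hcs : List.Chain' (Stp n G) s := hc.prefix ⟨post, hsplit.symm⟩
        have hcpost : List.Chain' (Stp n G) post := hc.suffix ⟨s, hsplit.symm⟩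
        obtain ⟨w0, hw0⟩ : ∃ w0, post.head? = some w0 :=
          ⟨post.head hpostne, List.head?_eq_head _⟩
        have hjun : Stp n G z w0 := junction_of_chain (by rw [← hsplit]; exact hc) hz hw0
        have hs'len : s'.length ≤ D + 1 := by
          rw [hs', List.length_map]
          exact hlplen
        have hmv := mk_move (G := G) (R := R) (pre := ([] : List ((V →₀ ZMod n) × V)))
          (post := post) hcs hs'c (by rw [hsh, hs'h]) (by rw [hz, hs'l]) (by omega)
        simp only [List.nil_append] at hmv
        rw [hsplit]
        refine Relation.ReflTransGen.head hmv ?_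
        refine ih (s' ++ post) a ?_ ?_ ?_ ?_ ?_
        · rw [List.length_append]
          have : l.length = s.length + post.length := by
            rw [hsplit, List.length_append]
          omega
        · intro p hp
          rcases List.mem_append.mp hp with hp' | hp'
          · rw [hs'] at hp'
            obtain ⟨w1, _, rfl⟩ := List.mem_map.mp hp'
            rfl
          · exact hcfg p (by rw [hsplit]; exact List.mem_append_right _ hp')
        · exact chain'_append_of hs'c hcpost hs'l hw0 hjun
        · rw [head?_append_left hs'ne]
          exact hs'h
        · rw [List.getLast?_append_of_ne_nil _ hpostne]
          rw [hsplit, List.getLast?_append_of_ne_nil _ hpostne] at hl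
          exact hl


lemma tog_eq (l : List ((V →₀ ZMod n) × V)) : tog l = pairSum tg l := rfl

lemma contract_tog0 (hG : G.Connected) {D : ℕ} (hD : ∀ x y : V, G.dist x y ≤ D) (R : ℕ)
    (hR : 4 * D + 20 ≤ R) {l : List ((V →₀ ZMod n) × V)} {a : (V →₀ ZMod n) × V}
    (h0 : tog l = 0) (hc : List.Chain' (Stp n G) l) (hh : l.head? = some a)
    (hl : l.getLast? = some a) :
    Relation.ReflTransGen (ElemMove (lamp n G) R) l [a] := by
  cases l with
  | nil => simp at hh
  | cons x t =>
      have hx : x = a := by simpa using hh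
      subst hx
      exact contract0 hG hD R hR (x :: t).length (x :: t) x le_rfl
        (tog_zero_cfg t x h0) hc hh hl

lemma contract (hG : G.Connected) {D : ℕ} (hD : ∀ x y : V, G.dist x y ≤ D) (R : ℕ)
    (hR : 4 * D + 20 ≤ R) :
    ∀ (N : ℕ) (l : List ((V →₀ ZMod n) × V)) (a : (V →₀ ZMod n) × V), tog l ≤ N →
      List.Chain' (Stp n G) l → l.head? = some a → l.getLast? = some a →
      Relation.ReflTransGen (ElemMove (lamp n G) R) l [a] := by
  intro N
  induction N with
  | zero =>
      intro l a hN hc hh hl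
      exact contract_tog0 hG hD R hR (by omega) hc hh hl
  | succ N ih =>
      intro l a hN hc hh hl
      by_cases h0 : tog l = 0
      · exact contract_tog0 hG hD R hR h0 hc hh hl
      cases l with
      | nil => simp at hh
      | cons a' t =>
      have ha' : a' = a := by simpa using hh
      subst ha'
      obtain ⟨A, p, q, B, hsplit, hpq, hcfg0⟩ := first_tog t a' h0
      have hstepPQ : Stp n G p q := by
        have hinf : [p, q] <:+: a' :: t := ⟨A, B, by rw [hsplit]; simp⟩
        exact List.isChain_pair.mp (hc.infix hinf)
      rcases hstepPQ with heq | hadj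
      · exact absurd (congrArg Prod.fst heq) hpq
      rcases hadj with ⟨hcfg1, _⟩ | ⟨hpos, hne1, hoff⟩
      · exact absurd hcfg1 hpq
      have hpu : p.1 p.2 ≠ q.1 p.2 := fun hcontra => hpq (Finsupp.ext fun z => by
        by_cases hz : z = p.2
        · rw [hz]; exact hcontra
        · exact hoff z hz)
      have hpa : p.1 = a'.1 := hcfg0 p (List.mem_append_right _ (by simp))
      have hqB : (q :: B).getLast? = some a' := by
        have h2 : a' :: t = (A ++ [p]) ++ (q :: B) := by rw [hsplit]; simp
        have hl' := hl
        rw [h2, List.getLast?_append_of_ne_nil _ (by simp : (q :: B) ≠ [])] at hl'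
        exact hl'
      have hfq : q.1 p.2 ≠ a'.1 p.2 := by
        rw [← hpa]
        exact fun hh2 => hpu hh2.symm
      obtain ⟨A₂, p₂, q₂, B₂, hsplit2, hpq2, hcfg2⟩ :=
        first_diff (fun r => r.1 p.2) B q a' hqB hfq
      have hpq2' : p₂.1 p.2 ≠ q₂.1 p.2 := hpq2
      have hLeq : a' :: t = (A ++ [p]) ++ ((A₂ ++ [p₂]) ++ (q₂ :: B₂)) := by
        rw [hsplit]
        have h3 : q :: B = (A₂ ++ [p₂]) ++ (q₂ :: B₂) := by rw [hsplit2]; simp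
        rw [show A ++ p :: q :: B = (A ++ [p]) ++ (q :: B) from by simp, h3]
      have hstep2 : Stp n G p₂ q₂ := by
        have hinf : [p₂, q₂] <:+: a' :: t := ⟨A ++ [p] ++ A₂, B₂, by rw [hLeq]; simp⟩
        exact List.isChain_pair.mp (hc.infix hinf)
      rcases hstep2 with heq2 | hadj2
      · exact absurd (DFunLike.congr_fun (congrArg Prod.fst heq2) p.2) hpq2'
      rcases hadj2 with ⟨hcfgeq2, _⟩ | ⟨hp2, hn2, ho2⟩
      · exact absurd (DFunLike.congr_fun hcfgeq2 p.2) hpq2'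
      have hpos2 : p₂.2 = p.2 := by
        by_contra hzz
        exact hpq2' (ho2 p.2 (fun e => hzz e.symm))
      obtain ⟨M₂, hM2⟩ : ∃ M₂, A₂ ++ [p₂] = q :: M₂ := by
        cases A₂ with
        | nil =>
            have hqp : q = p₂ := by simpa using congrArg List.head? hsplit2
            exact ⟨[], by rw [hqp]; simp⟩
        | cons c t₂ =>
            have hqc : q = c := by simpa using congrArg List.head? hsplit2
            exact ⟨t₂ ++ [p₂], by rw [hqc]; simp⟩
      have hMlast : (q :: M₂).getLast? = some p₂ := by
        rw [← hM2]
        exact getLast?_append_of (by simp)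
      have hMchain : List.Chain' (Stp n G) (q :: M₂) := by
        rw [← hM2]
        refine hc.infix ⟨A ++ [p], q₂ :: B₂, ?_⟩
        rw [hLeq]; simp
      have hMcfg : ∀ r ∈ q :: M₂, r.1 p.2 = q.1 p.2 := by
        rw [← hM2]; exact hcfg2
      obtain ⟨Dq, hDqc, hDqh, hDql, hDqlen⟩ := exists_det hG hD p.2 (a'.1 p.2) q
      have hshq : shiftC p.2 (a'.1 p.2) q = p := by
        refine Prod.ext_iff.mpr ⟨?_, ?_⟩
        · show q.1.update p.2 (a'.1 p.2) = p.1
          ext z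
          by_cases hz : z = p.2
          · subst hz
            rw [upd_same, hpa]
          · rw [upd_ne _ _ hz]
            exact (hoff z hz).symm
        · exact hpos.symm
      have hs1 : List.Chain' (Stp n G) [p, q] :=
        List.isChain_pair.mpr (Or.inr (Or.inr ⟨hpos, hne1, hoff⟩))
      have hs1' : List.Chain' (Stp n G) ([p] ++ Dq) :=
        chain'_append_of (List.isChain_singleton p) hDqc rfl hDqh
          (by rw [hshq]; exact Or.inl rfl)
      have hh1 : [p, q].head? = ([p] ++ Dq).head? := rfl
      have hl1 : [p, q].getLast? = ([p] ++ Dq).getLast? := by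
        rw [getLast?_append_of (E := [p]) hDql]
        simp
      have hlen1 : [p, q].length + ([p] ++ Dq).length ≤ R := by
        simp only [List.length_cons, List.length_append, List.length_singleton,
          List.length_nil]
        omega
      have hmv1 := mk_move (G := G) (R := R) (pre := A) (post := M₂ ++ q₂ :: B₂)
        hs1 hs1' hh1 hl1 hlen1
      obtain ⟨Dl, ⟨hDlc, hDlh, hDll, hDllen⟩, hrt2⟩ :=
        slide_aux hG hD p.2 (a'.1 p.2) R hR M₂ q (A ++ [p]) (q₂ :: B₂) Dq p₂
          hMchain hMcfg hMlast ⟨hDqc, hDqh, hDql, hDqlen⟩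
      have hdrop : (q :: M₂).dropLast = A₂ := by
        rw [← hM2]
        simp
      have hstep2' : Stp n G p₂ q₂ := Or.inr (Or.inr ⟨hp2, hn2, ho2⟩)
      have hmerge : Stp n G (shiftC p.2 (a'.1 p.2) p₂) q₂ := by
        by_cases hcase : a'.1 p.2 = q₂.1 p.2
        · refine Or.inl (Prod.ext_iff.mpr ⟨?_, ?_⟩)
          · show p₂.1.update p.2 (a'.1 p.2) = q₂.1
            ext z
            by_cases hz : z = p.2
            · subst hz
              rw [upd_same]
              exact hcase
            · rw [upd_ne _ _ hz]
              exact ho2 z (by rw [hpos2]; exact hz)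
          · exact hp2
        · refine Or.inr (Or.inr ⟨hp2, ?_, ?_⟩)
          · intro hcontra
            apply hcase
            have h5 := DFunLike.congr_fun hcontra p.2
            rwa [show (shiftC p.2 (a'.1 p.2) p₂).1 p.2 = a'.1 p.2 from upd_same _ _ _] at h5
          · intro z hz
            have hz' : z ≠ p.2 := by rw [← hpos2]; exact hz
            show p₂.1.update p.2 (a'.1 p.2) z = q₂.1 z
            rw [upd_ne _ _ hz']
            exact ho2 z hz
      have hs3 : List.Chain' (Stp n G) (Dl ++ [q₂]) :=
        chain'_append_of hDlc (List.isChain_singleton _) hDll rfl hstep2'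
      have hs3' : List.Chain' (Stp n G) [shiftC p.2 (a'.1 p.2) p₂, q₂] :=
        List.isChain_pair.mpr hmerge
      have hh3 : (Dl ++ [q₂]).head? = [shiftC p.2 (a'.1 p.2) p₂, q₂].head? := by
        rw [head?_append_left (ne_nil_of_head? hDlh), hDlh]
        rfl
      have hl3 : (Dl ++ [q₂]).getLast? = [shiftC p.2 (a'.1 p.2) p₂, q₂].getLast? := by
        rw [getLast?_append_of (E := Dl) (F := [q₂]) (p := q₂) (by simp)]
        simp
      have hlen3 : (Dl ++ [q₂]).length + [shiftC p.2 (a'.1 p.2) p₂, q₂].length ≤ R := by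
        simp only [List.length_append, List.length_singleton, List.length_cons,
          List.length_nil]
        omega
      have hmv3 := mk_move (G := G) (R := R) (pre := (A ++ [p]) ++ A₂.map (shiftC p.2 (a'.1 p.2)))
        (post := B₂) hs3 hs3' hh3 hl3 hlen3
      have hmapM : (q :: M₂).map (shiftC p.2 (a'.1 p.2)) = A₂.map (shiftC p.2 (a'.1 p.2)) ++ [shiftC p.2 (a'.1 p.2) p₂] := by
        rw [← hM2]
        simp
      -- the new loop
      set l₃ : List ((V →₀ ZMod n) × V) :=
        (A ++ [p]) ++ ((q :: M₂).map (shiftC p.2 (a'.1 p.2)) ++ q₂ :: B₂) with hl₃def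
      have hLeq' : a' :: t = (A ++ [p]) ++ ((q :: M₂) ++ (q₂ :: B₂)) := by
        rw [hLeq, hM2]
      have j_a : (A ++ [p]).getLast? = some p := getLast?_append_of (by simp)
      have j_c : ((q :: M₂).map (shiftC p.2 (a'.1 p.2))).getLast? = some (shiftC p.2 (a'.1 p.2) p₂) := by
        rw [getLast?_map, hMlast]
        rfl
      -- chain of l₃
      have c1 : List.Chain' (Stp n G) (A ++ [p]) := hc.prefix ⟨_, hLeq.symm⟩
      have c2 : List.Chain' (Stp n G) ((q :: M₂).map (shiftC p.2 (a'.1 p.2))) :=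
        chain_map_shiftC (q :: M₂) hMchain hMcfg
      have c3 : List.Chain' (Stp n G) (q₂ :: B₂) :=
        hc.suffix ⟨(A ++ [p]) ++ (A₂ ++ [p₂]), by rw [hLeq]; simp⟩
      have jheadmap : ((q :: M₂).map (shiftC p.2 (a'.1 p.2)) ++ q₂ :: B₂).head?
          = some (shiftC p.2 (a'.1 p.2) q) := by
        rw [head?_append_left (by simp : (q :: M₂).map (shiftC p.2 (a'.1 p.2)) ≠ [])]
        rfl
      have jstep : Stp n G p (shiftC p.2 (a'.1 p.2) q) := by
        rw [hshq]
        exact Or.inl rfl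
      have hc₃ : List.Chain' (Stp n G) l₃ :=
        chain'_append_of c1 (chain'_append_of c2 c3 j_c rfl hmerge) j_a jheadmap jstep
      have hh₃ : l₃.head? = some a' := by
        rw [hl₃def, head?_append_left (by simp : A ++ [p] ≠ [])]
        exact head?_of_append (by rw [← hLeq]; exact hh) (by simp)
      have hq₂B : (q₂ :: B₂).getLast? = some a' := by
        have hl' := hl
        rw [hLeq, List.getLast?_append_of_ne_nil _
            (by simp : (A₂ ++ [p₂]) ++ (q₂ :: B₂) ≠ []),
          List.getLast?_append_of_ne_nil _ (by simp : (q₂ :: B₂) ≠ [])] at hl'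
        exact hl'
      have hl₃ : l₃.getLast? = some a' := by
        rw [hl₃def, List.getLast?_append_of_ne_nil _
            (by simp : (q :: M₂).map (shiftC p.2 (a'.1 p.2)) ++ q₂ :: B₂ ≠ []),
          List.getLast?_append_of_ne_nil _ (by simp : (q₂ :: B₂) ≠ [])]
        exact hq₂B
      -- toggle count decreases
      have ht1 : tog (a' :: t) = tog (A ++ [p]) + tg p q
          + (tog (q :: M₂) + tg p₂ q₂ + tog (q₂ :: B₂)) := by
        conv_lhs => rw [hLeq']
        rw [tog_eq, pairSum_append tg (A ++ [p]) ((q :: M₂) ++ (q₂ :: B₂)),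
          pairSum_append tg (q :: M₂) (q₂ :: B₂), j_a, hMlast,
          show ((q :: M₂) ++ (q₂ :: B₂)).head? = some q from by simp,
          show (q₂ :: B₂).head? = some q₂ from rfl]
        rfl
      have ht2 : tog l₃ = tog (A ++ [p]) + tg p (shiftC p.2 (a'.1 p.2) q)
          + (tog ((q :: M₂).map (shiftC p.2 (a'.1 p.2))) + tg (shiftC p.2 (a'.1 p.2) p₂) q₂ + tog (q₂ :: B₂)) := by
        rw [hl₃def, tog_eq,
          pairSum_append tg (A ++ [p]) ((q :: M₂).map (shiftC p.2 (a'.1 p.2)) ++ q₂ :: B₂),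
          pairSum_append tg ((q :: M₂).map (shiftC p.2 (a'.1 p.2))) (q₂ :: B₂), j_a, j_c,
          show ((q :: M₂).map (shiftC p.2 (a'.1 p.2)) ++ q₂ :: B₂).head? = some (shiftC p.2 (a'.1 p.2) q) from by simp,
          show (q₂ :: B₂).head? = some q₂ from rfl]
        rfl
      have htog₃ : tog l₃ ≤ N := by
        have hm := tog_map_shiftC_le p.2 (a'.1 p.2) (q :: M₂)
        have h3 := tg_le_one (shiftC p.2 (a'.1 p.2) p₂) q₂
        have e_pq : tg p q = 1 := tg_eq_one hne1
        have e_p2q2 : tg p₂ q₂ = 1 :=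
          tg_eq_one (fun e => hpq2' (DFunLike.congr_fun e p.2))
        have e_pshq : tg p (shiftC p.2 (a'.1 p.2) q) = 0 := by
          rw [hshq]
          exact tg_eq_zero rfl
        omega
      -- assemble the moves
      have e0 : a' :: t = A ++ [p, q] ++ (M₂ ++ q₂ :: B₂) := by
        rw [hLeq']
        simp
      have e1 : A ++ ([p] ++ Dq) ++ (M₂ ++ q₂ :: B₂)
          = (A ++ [p]) ++ Dq ++ M₂ ++ (q₂ :: B₂) := by
        simp
      have e2 : (A ++ [p]) ++ ((q :: M₂).dropLast).map (shiftC p.2 (a'.1 p.2)) ++ Dl ++ (q₂ :: B₂)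
          = ((A ++ [p]) ++ A₂.map (shiftC p.2 (a'.1 p.2))) ++ (Dl ++ [q₂]) ++ B₂ := by
        rw [hdrop]
        simp
      have e3 : ((A ++ [p]) ++ A₂.map (shiftC p.2 (a'.1 p.2))) ++ [shiftC p.2 (a'.1 p.2) p₂, q₂] ++ B₂ = l₃ := by
        rw [hl₃def, hmapM]
        simp
      refine Relation.ReflTransGen.trans ?_ (ih l₃ a' htog₃ hc₃ hh₃ hl₃)
      rw [e0]
      refine Relation.ReflTransGen.head hmv1 ?_
      rw [e1]
      refine Relation.ReflTransGen.trans hrt2 ?_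
      rw [e2]
      refine Relation.ReflTransGen.head hmv3 ?_
      rw [e3]

theorem backward_dir (hG : G.Connected)
    (h : ∃ D : ℕ, ∀ x y : V, G.dist x y ≤ D) :
    CoarselySimplyConnected (lamp n G) := by
  obtain ⟨D, hD⟩ := h
  refine ⟨4 * D + 20, ?_⟩
  intro a l hchain hh hl
  exact contract hG hD (4 * D + 20) le_rfl (tog l) l a le_rfl hchain hh hl


end Backward

end LLAux

/-- The lamplighter graph `L_n(X)` is coarsely simply connected if and only if the base
graph `X` is bounded. -/
theorem stmt12 {V : Type*} [Nonempty V] (n : ℕ) (hn : 2 ≤ n) (G : SimpleGraph V)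
    (hG : G.Connected) :
    CoarselySimplyConnected (lamp n G) ↔ ∃ R : ℕ, ∀ x y : V, G.dist x y ≤ R :=
  ⟨LLAux.forward_dir hn hG, LLAux.backward_dir hG⟩
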